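/- Let G be a simple graph on [r] with no isolated vertex, and let α ∈ ℝ^r be a vertex of SP(G) = {x ∈ ℝ^r : x_i + x_j ≥ 1 for edges {i,j}, x ≥ 0}. Set S_0 = {i : α_i = 0} and S_1 = {i : α_i = 1}. Then S_0 is an independent set of G and S_1 = N(S_0), the set of neighbors of S_0. -/

import Mathlib

/-- The polyhedron `SP(G) = {x ∈ ℝ^V : x i + x j ≥ 1 for all edges ij, x ≥ 0}`. -/
def SPgraph {V : Type*} (G : SimpleGraph V) : Set (V → ℝ) :=
  {x | (∀ i j, G.Adj i j → 1 ≤ x i + x j) ∧ ∀ i, 0 ≤ x i}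

/-- The (open) neighbourhood of a set of vertices: the vertices outside `S`
adjacent to some vertex of `S`. -/
def nbhdSet {V : Type*} (G : SimpleGraph V) (S : Set V) : Set V :=
  {v | v ∉ S ∧ ∃ u ∈ S, G.Adj u v}

lemma update_mem_SP {V : Type*} [DecidableEq V] (G : SimpleGraph V) (α : V → ℝ)
    (hmem : α ∈ SPgraph G) (v : V) (c : ℝ) (hc0 : 0 ≤ c)
    (hcadj : ∀ u, G.Adj u v → 1 ≤ α u + c) : Function.update α v c ∈ SPgraph G := by
  constructor
  · intro i j hij
    rcases eq_or_ne i v with hi | hi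
    · subst hi
      rcases eq_or_ne j i with hj | hj
      · subst hj; exact absurd hij G.irrefl
      · rw [Function.update_self, Function.update_of_ne hj]
        have := hcadj j hij.symm; linarith
    · rw [Function.update_of_ne hi]
      rcases eq_or_ne j v with hj | hj
      · subst hj; rw [Function.update_self]; exact hcadj i hij
      · rw [Function.update_of_ne hj]; exact hmem.1 i j hij
  · intro i
    rcases eq_or_ne i v with hi | hi
    · subst hi; rwa [Function.update_self]
    · rw [Function.update_of_ne hi]; exact hmem.2 i

lemma perturb_contra {V : Type*} [DecidableEq V] (G : SimpleGraph V) (α : V → ℝ)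
    (hα : α ∈ Set.extremePoints ℝ (SPgraph G)) (v : V) (ε : ℝ) (hε : 0 < ε)
    (hx : Function.update α v (α v - ε) ∈ SPgraph G)
    (hy : Function.update α v (α v + ε) ∈ SPgraph G) : False := by
  obtain ⟨hmem, hext⟩ := hα
  have hseg : α ∈ openSegment ℝ (Function.update α v (α v - ε))
      (Function.update α v (α v + ε)) := by
    refine ⟨1/2, 1/2, by norm_num, by norm_num, by norm_num, ?_⟩
    funext i
    rcases eq_or_ne i v with h | h
    · subst h; simp [Function.update_self]; ring
    · simp [Function.update_of_ne h]; ring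
  have hc := hext hx hy hseg
  have := congrFun hc v
  rw [Function.update_self] at this
  linarith

lemma extreme_le_one {V : Type*} [DecidableEq V] (G : SimpleGraph V) (α : V → ℝ)
    (hα : α ∈ Set.extremePoints ℝ (SPgraph G)) (v : V) : α v ≤ 1 := by
  by_contra h
  push_neg at h
  obtain ⟨⟨hadj, hpos⟩, -⟩ := id hα
  refine perturb_contra G α hα v (α v - 1) (by linarith) ?_ ?_
  · exact update_mem_SP G α hα.1 v _ (by linarith)
      (fun u _ => by have := hpos u; linarith)
  · exact update_mem_SP G α hα.1 v _ (by linarith)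
      (fun u _ => by have := hpos u; linarith)

/-- if `α` is a vertex of `SP(G)` (for `G` with no isolated vertex)
with `S₀ = {i : α i = 0}` and `S₁ = {i : α i = 1}`, then `S₀` is an independent
set of `G` and `S₁ = N(S₀)`. -/
theorem vertex_SP_zero_set_independent_one_set_nbhd
    {r : ℕ} (G : SimpleGraph (Fin r))
    (hiso : ∀ i, ∃ j, G.Adj i j)
    (α : Fin r → ℝ) (hα : α ∈ Set.extremePoints ℝ (SPgraph G)) :
    (∀ i, α i = 0 → ∀ j, α j = 0 → ¬ G.Adj i j) ∧
      {i | α i = 1} = nbhdSet G {i | α i = 0} := by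
  classical
  obtain ⟨⟨hadj, hpos⟩, -⟩ := id hα
  constructor
  · intro i hi j hj hij
    have := hadj i j hij
    rw [hi, hj] at this; linarith
  · ext v
    simp only [Set.mem_setOf_eq, nbhdSet]
    constructor
    · intro hv1
      refine ⟨by rw [hv1]; norm_num, ?_⟩
      by_contra hno
      push_neg at hno
      have hnbr : ∀ u, G.Adj u v → 0 < α u := by
        intro u hu
        rcases lt_or_eq_of_le (hpos u) with h | h
        · exact h
        · exact absurd hu (hno u h.symm)
      set s : Finset (Fin r) := Finset.univ.filter (fun u => G.Adj u v) with hs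
      obtain ⟨j, hj⟩ := hiso v
      have hsne : s.Nonempty := ⟨j, by simp [hs, hj.symm]⟩
      set ε : ℝ := min 1 (s.inf' hsne fun u => α u) with hε
      have hεpos : 0 < ε := by
        apply lt_min one_pos
        rw [Finset.lt_inf'_iff]
        intro u hu
        exact hnbr u (by simpa [hs] using hu)
      have hεle1 : ε ≤ 1 := min_le_left _ _
      have hεleu : ∀ u, G.Adj u v → ε ≤ α u := by
        intro u hu
        exact le_trans (min_le_right _ _) (Finset.inf'_le _ (by simp [hs, hu]))
      refine perturb_contra G α hα v ε hεpos ?_ ?_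
      · exact update_mem_SP G α hα.1 v _ (by rw [hv1]; linarith)
          (fun u hu => by have := hεleu u hu; rw [hv1]; linarith)
      · exact update_mem_SP G α hα.1 v _ (by have := hpos v; linarith)
          (fun u hu => by have := hadj u v hu; linarith)
    · rintro ⟨hv0, u, hu0, huv⟩
      have h1 : 1 ≤ α u + α v := hadj u v huv
      have h2 : α v ≤ 1 := extreme_le_one G α hα v
      linarith
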